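/- arXiv:2312.04196 — 2 statements merged into one kernel-verified Lean document; each statement's English description precedes it below -/
import Mathlib

section
/- Let G be a group generated by two elements x and y, with the two-variable filtration G(m₁,m₂) defined by: G(1,0) = normal closure of {x}, G(0,1) = normal closure of {y}, and G(m) = ⟨[G(m'),G(m'')] : m'+m''=m, m',m'' ≠ (0,0)⟩ for |m| ≥ 2. If (m₁,m₂) ≥ (n₁,n₂) componentwise (with both indices nonzero), then G(m₁,m₂) ⊆ G(n₁,n₂). -/
/-- A supremum of normal subgroups is normal. -/
lemma iSup_normal_aux {G : Type*} [Group G] {ι : Sort*} (f : ι → Subgroup G)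
    (h : ∀ i, (f i).Normal) : (⨆ i, f i).Normal := by
  constructor
  intro a ha g
  refine Subgroup.iSup_induction (C := fun a => g * a * g⁻¹ ∈ ⨆ i, f i) f ha
    (fun i x hx => ?_) (by simpa using one_mem _) (fun x y hx hy => ?_)
  · exact Subgroup.mem_iSup_of_mem i ((h i).conj_mem x hx g)
  · have : g * (x * y) * g⁻¹ = (g * x * g⁻¹) * (g * y * g⁻¹) := by group
    show g * (x * y) * g⁻¹ ∈ ⨆ i, f i
    rw [this]; exact mul_mem hx hy

/-- Helper: pairs in `ℕ × ℕ` are nonzero iff a component is nonzero. -/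
lemma pair_ne_zero {p : ℕ × ℕ} : p ≠ 0 ↔ p.1 ≠ 0 ∨ p.2 ≠ 0 := by
  constructor
  · intro h
    by_contra hc
    push_neg at hc
    exact h (Prod.ext hc.1 hc.2)
  · rintro (h | h) rfl <;> simp at h

/-- the two-variable filtration on a group generated by `x, y` is
antitone with respect to the componentwise order on nonzero indices:
if `n ≤ m` componentwise (both nonzero), then `F m ≤ F n`. -/
theorem statement2 {G : Type*} [Group G] (x y : G)
    (hgen : Subgroup.closure {x, y} = ⊤)
    (F : ℕ × ℕ → Subgroup G)
    (h10 : F (1, 0) = Subgroup.normalClosure {x})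
    (h01 : F (0, 1) = Subgroup.normalClosure {y})
    (hrec : ∀ m : ℕ × ℕ, 2 ≤ m.1 + m.2 →
      F m = ⨆ (q : (ℕ × ℕ) × (ℕ × ℕ)) (_ : q.1 ≠ 0) (_ : q.2 ≠ 0) (_ : q.1 + q.2 = m),
        ⁅F q.1, F q.2⁆) :
    ∀ m n : ℕ × ℕ, m ≠ 0 → n ≠ 0 → n ≤ m → F m ≤ F n := by
  -- Every `F m` with `m ≠ 0` is normal, by strong induction on `m.1 + m.2`.
  have hnorm : ∀ k : ℕ, ∀ m : ℕ × ℕ, m.1 + m.2 = k → m ≠ 0 → (F m).Normal := by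
    intro k
    induction k using Nat.strong_induction_on with
    | _ k ih =>
      intro m hk hm
      rcases lt_or_ge (m.1 + m.2) 2 with hlt | hge
      · -- sum is 1, so `m = (1,0)` or `m = (0,1)`
        have hm' := pair_ne_zero.mp hm
        have : m = (1, 0) ∨ m = (0, 1) := by
          rcases m with ⟨a, b⟩
          simp only [Prod.mk.injEq]
          simp only at hlt hm' ⊢
          omega
        rcases this with rfl | rfl
        · rw [h10]; exact Subgroup.normalClosure_normal
        · rw [h01]; exact Subgroup.normalClosure_normal
      · rw [hrec m hge]
        refine iSup_normal_aux _ fun q => iSup_normal_aux _ fun hq1 => ?_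
        refine iSup_normal_aux _ fun hq2 => iSup_normal_aux _ fun hqm => ?_
        have hq1' := pair_ne_zero.mp hq1
        have hq2' := pair_ne_zero.mp hq2
        have hsum1 : q.1.1 + q.1.2 + (q.2.1 + q.2.2) = m.1 + m.2 := by
          have h1 : q.1.1 + q.2.1 = m.1 := congrArg Prod.fst hqm
          have h2 : q.1.2 + q.2.2 = m.2 := congrArg Prod.snd hqm
          omega
        haveI := ih (q.1.1 + q.1.2) (by omega) q.1 rfl hq1
        haveI := ih (q.2.1 + q.2.2) (by omega) q.2 rfl hq2
        exact Subgroup.commutator_normal (F q.1) (F q.2)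
  have hnorm' : ∀ m : ℕ × ℕ, m ≠ 0 → (F m).Normal := fun m hm => hnorm _ m rfl hm
  -- Main claim by strong induction on `m.1 + m.2`.
  have main : ∀ k : ℕ, ∀ m n : ℕ × ℕ, m.1 + m.2 = k → m ≠ 0 → n ≠ 0 → n ≤ m → F m ≤ F n := by
    intro k
    induction k using Nat.strong_induction_on with
    | _ k ih =>
      intro m n hk hm hn hnm
      have hnm1 : n.1 ≤ m.1 := hnm.1
      have hnm2 : n.2 ≤ m.2 := hnm.2
      rcases lt_or_ge (m.1 + m.2) 2 with hlt | hge
      · -- base case: `m = n`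
        have hm' := pair_ne_zero.mp hm
        have hn' := pair_ne_zero.mp hn
        have : n = m := by
          rcases m with ⟨a, b⟩; rcases n with ⟨c, d⟩
          simp only [Prod.mk.injEq]
          simp only at hlt hm' hn' hnm1 hnm2 ⊢
          omega
        rw [this]
      · rw [hrec m hge]
        refine iSup_le fun q => iSup_le fun hq1 => iSup_le fun hq2 => iSup_le fun hqm => ?_
        haveI := hnorm' q.1 hq1
        haveI := hnorm' q.2 hq2
        obtain ⟨⟨a1, a2⟩, b1, b2⟩ := q
        obtain ⟨m1, m2⟩ := m
        obtain ⟨n1, n2⟩ := n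
        simp only [Prod.mk.injEq, Prod.mk_add_mk] at hqm
        simp only [ne_eq, Prod.mk_eq_zero, not_and_or] at hq1 hq2 hm hn
        simp only at hnm1 hnm2 hk hge
        have hlt1 : a1 + a2 < k := by omega
        have hlt2 : b1 + b2 < k := by omega
        by_cases hz1 : min a1 n1 = 0 ∧ min a2 n2 = 0
        · -- then `n ≤ (b1, b2)`
          refine le_trans (Subgroup.commutator_le_right _ _)
            (ih _ hlt2 (b1, b2) (n1, n2) rfl ?_ ?_ ?_) <;>
            simp only [ne_eq, Prod.mk_eq_zero, not_and_or, Prod.mk_le_mk] <;> omega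
        · by_cases hz2 : n1 - min a1 n1 = 0 ∧ n2 - min a2 n2 = 0
          · -- then `n ≤ (a1, a2)`
            refine le_trans (Subgroup.commutator_le_left _ _)
              (ih _ hlt1 (a1, a2) (n1, n2) rfl ?_ ?_ ?_) <;>
              simp only [ne_eq, Prod.mk_eq_zero, not_and_or, Prod.mk_le_mk] <;> omega
          · -- genuine decomposition of `n`
            set r1 : ℕ × ℕ := (min a1 n1, min a2 n2) with hr1def
            set r2 : ℕ × ℕ := (n1 - min a1 n1, n2 - min a2 n2) with hr2def
            have hr1ne : r1 ≠ 0 := by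
              simp only [hr1def, ne_eq, Prod.mk_eq_zero, not_and_or]; omega
            have hr2ne : r2 ≠ 0 := by
              simp only [hr2def, ne_eq, Prod.mk_eq_zero, not_and_or]; omega
            have hsum : r1 + r2 = (n1, n2) := by
              simp only [hr1def, hr2def, Prod.mk_add_mk, Prod.mk.injEq]; omega
            have hle1 : F (a1, a2) ≤ F r1 := by
              refine ih _ hlt1 (a1, a2) r1 rfl ?_ hr1ne ?_ <;>
                simp only [hr1def, ne_eq, Prod.mk_eq_zero, not_and_or, Prod.mk_le_mk] <;> omega
            have hle2 : F (b1, b2) ≤ F r2 := by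
              refine ih _ hlt2 (b1, b2) r2 rfl ?_ hr2ne ?_ <;>
                simp only [hr2def, ne_eq, Prod.mk_eq_zero, not_and_or, Prod.mk_le_mk] <;> omega
            have hn2 : 2 ≤ n1 + n2 := by omega
            calc ⁅F (a1, a2), F (b1, b2)⁆ ≤ ⁅F r1, F r2⁆ := Subgroup.commutator_mono hle1 hle2
              _ ≤ F (n1, n2) := by
                rw [hrec (n1, n2) hn2]
                exact le_iSup_of_le (r1, r2) (le_iSup_of_le hr1ne
                  (le_iSup_of_le hr2ne (le_iSup_of_le hsum le_rfl)))
  exact fun m n hm hn hnm => main _ m n rfl hm hn hnm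
end

section
/- Let G be a group generated by two elements x and y, with the two-variable filtration G(m₁,m₂) (G(1,0) = normal closure of {x}, G(0,1) = normal closure of {y}, and G(m) = ⟨[G(m'),G(m'')] : m'+m''=m⟩ for |m| ≥ 2). Fix m = (m₁,m₂) with |m| ≥ 1, and let f : G → G be an automorphism such that for k ∈ {(1,0),(0,1)} and every g ∈ G(k), one has f(g)·g⁻¹ ∈ G(k + m). Then for every n = (n₁,n₂) with |n| ≥ 1 and every g ∈ G(n), one has f(g)·g⁻¹ ∈ G(n + m). In other words, if f acts trivially on G(1,0)/G(m+(1,0)) and on G(0,1)/G(m+(0,1)), then f acts trivially on G(n)/G(n+m) for all n. -/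
open scoped commutatorElement

section Aux

variable {G : Type*} [Group G]

private lemma aux_normal_iSup {ι : Sort*} (H : ι → Subgroup G) (h : ∀ i, (H i).Normal) :
    (⨆ i, H i).Normal := by
  constructor
  intro n hn g
  refine Subgroup.iSup_induction H (C := fun z => g * z * g⁻¹ ∈ ⨆ i, H i) hn
    (fun i z hz => Subgroup.mem_iSup_of_mem i ((h i).conj_mem z hz g)) (by simpa using one_mem (⨆ i, H i)) ?_
  intro a b ha hb
  have : g * (a * b) * g⁻¹ = (g * a * g⁻¹) * (g * b * g⁻¹) := by group
  rw [this]; exact mul_mem ha hb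

private lemma aux_normal_prop {p : Prop} {K : Subgroup G} (h : p → K.Normal) :
    (⨆ _ : p, K).Normal := by
  by_cases hp : p
  · rw [iSup_pos hp]; exact h hp
  · rw [iSup_neg hp]; infer_instance

private lemma aux_pos {p : ℕ × ℕ} (h : p ≠ 0) : 1 ≤ p.1 + p.2 := by
  rcases p with ⟨a, b⟩
  have : ¬(a = 0 ∧ b = 0) := by simpa [Prod.ext_iff] using h
  omega

private lemma aux_commute_mk (N : Subgroup G) [N.Normal] {u v : G} (h : ⁅u, v⁆ ∈ N) :
    (u : G ⧸ N) * (v : G ⧸ N) = (v : G ⧸ N) * (u : G ⧸ N) := by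
  have h1 : ((⁅u, v⁆ : G) : G ⧸ N) = 1 := (QuotientGroup.eq_one_iff _).2 h
  have h2 : (u : G ⧸ N) * v * (u : G ⧸ N)⁻¹ * (v : G ⧸ N)⁻¹ = 1 := by
    simpa [commutatorElement_def] using h1
  calc (u : G ⧸ N) * v
      = ((u : G ⧸ N) * v * (u : G ⧸ N)⁻¹ * (v : G ⧸ N)⁻¹) * ((v : G ⧸ N) * u) := by group
    _ = (v : G ⧸ N) * u := by rw [h2]; group

private lemma key_calc {H : Type*} [Group H] (A B u v : H)
    (hAB : A * B = B * A) (hAv : A * v = v * A) (hBu : B * u = u * B)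
    (hAw : A * (u * v * u⁻¹ * v⁻¹) = (u * v * u⁻¹ * v⁻¹) * A)
    (hBw : B * (u * v * u⁻¹ * v⁻¹) = (u * v * u⁻¹ * v⁻¹) * B) :
    ⁅A * u, B * v⁆ = ⁅u, v⁆ := by
  have hAv' : A⁻¹ * v⁻¹ = v⁻¹ * A⁻¹ := by
    calc A⁻¹ * v⁻¹ = (v * A)⁻¹ := (mul_inv_rev v A).symm
    _ = (A * v)⁻¹ := by rw [hAv]
    _ = v⁻¹ * A⁻¹ := mul_inv_rev A v
  have hAB' : A⁻¹ * B⁻¹ = (A * B)⁻¹ := by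
    calc A⁻¹ * B⁻¹ = (B * A)⁻¹ := (mul_inv_rev B A).symm
    _ = (A * B)⁻¹ := by rw [hAB]
  have hABw : (A * B) * (u * v * u⁻¹ * v⁻¹) = (u * v * u⁻¹ * v⁻¹) * (A * B) := by
    calc (A * B) * (u * v * u⁻¹ * v⁻¹) = A * (B * (u * v * u⁻¹ * v⁻¹)) := by rw [mul_assoc]
    _ = A * ((u * v * u⁻¹ * v⁻¹) * B) := by rw [hBw]
    _ = (A * (u * v * u⁻¹ * v⁻¹)) * B := (mul_assoc A (u * v * u⁻¹ * v⁻¹) B).symm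
    _ = ((u * v * u⁻¹ * v⁻¹) * A) * B := by rw [hAw]
    _ = (u * v * u⁻¹ * v⁻¹) * (A * B) := by rw [mul_assoc]
  simp only [commutatorElement_def]
  calc A * u * (B * v) * (A * u)⁻¹ * (B * v)⁻¹
      = A * (u * B) * v * u⁻¹ * (A⁻¹ * v⁻¹) * B⁻¹ := by group
    _ = A * (B * u) * v * u⁻¹ * (v⁻¹ * A⁻¹) * B⁻¹ := by rw [hBu, hAv']
    _ = (A * B) * (u * v * u⁻¹ * v⁻¹) * (A⁻¹ * B⁻¹) := by group
    _ = (A * B) * (u * v * u⁻¹ * v⁻¹) * (A * B)⁻¹ := by rw [hAB']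
    _ = (u * v * u⁻¹ * v⁻¹) * (A * B) * (A * B)⁻¹ := by rw [hABw]
    _ = u * v * u⁻¹ * v⁻¹ := by group

end Aux

/-- if an automorphism `f` of a group generated by `x, y` (preserving
the two-variable filtration) acts trivially on `F(1,0)/F((1,0)+m)` and on
`F(0,1)/F((0,1)+m)`, then it acts trivially on `F(n)/F(n+m)` for every nonzero `n`. -/
theorem statement13 {G : Type*} [Group G] (x y : G)
    (hgen : Subgroup.closure {x, y} = ⊤)
    (F : ℕ × ℕ → Subgroup G)
    (h10 : F (1, 0) = Subgroup.normalClosure {x})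
    (h01 : F (0, 1) = Subgroup.normalClosure {y})
    (hrec : ∀ m : ℕ × ℕ, 2 ≤ m.1 + m.2 →
      F m = ⨆ (q : (ℕ × ℕ) × (ℕ × ℕ)) (_ : q.1 ≠ 0) (_ : q.2 ≠ 0) (_ : q.1 + q.2 = m),
        ⁅F q.1, F q.2⁆)
    (m : ℕ × ℕ) (hm : m ≠ 0)
    (f : G ≃* G)
    (hpres : ∀ n : ℕ × ℕ, n ≠ 0 → ∀ g ∈ F n, f g ∈ F n)
    (hf10 : ∀ g ∈ F (1, 0), f g * g⁻¹ ∈ F ((1, 0) + m))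
    (hf01 : ∀ g ∈ F (0, 1), f g * g⁻¹ ∈ F ((0, 1) + m)) :
    ∀ n : ℕ × ℕ, n ≠ 0 → ∀ g ∈ F n, f g * g⁻¹ ∈ F (n + m) := by
  -- Normality of all filtration subgroups
  have hnorm : ∀ k : ℕ × ℕ, k ≠ 0 → (F k).Normal := by
    have key : ∀ s : ℕ, ∀ k : ℕ × ℕ, k.1 + k.2 = s → k ≠ 0 → (F k).Normal := by
      intro s
      induction s using Nat.strong_induction_on with
      | _ s ih =>
        intro k hs hk
        rcases lt_or_ge (k.1 + k.2) 2 with h2 | h2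
        · have h1 : k.1 + k.2 = 1 := by have := aux_pos hk; omega
          rcases Nat.eq_zero_or_pos k.1 with hk1 | hk1
          · have : k = (0, 1) := Prod.ext hk1 (by omega)
            rw [this, h01]; exact Subgroup.normalClosure_normal
          · have : k = (1, 0) := Prod.ext (by omega) (by omega)
            rw [this, h10]; exact Subgroup.normalClosure_normal
        · rw [hrec k h2]
          refine aux_normal_iSup _ fun q => aux_normal_prop fun hq1 => aux_normal_prop
            fun hq2 => aux_normal_prop fun hq => ?_
          have hsA : q.1.1 + q.2.1 = k.1 := by simpa using congrArg Prod.fst hq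
          have hsB : q.1.2 + q.2.2 = k.2 := by simpa using congrArg Prod.snd hq
          have p1 := aux_pos hq1
          have p2 := aux_pos hq2
          haveI := ih (q.1.1 + q.1.2) (by omega) q.1 rfl hq1
          haveI := ih (q.2.1 + q.2.2) (by omega) q.2 rfl hq2
          exact Subgroup.commutator_normal _ _
    intro k hk; exact key (k.1 + k.2) k rfl hk
  -- commutators land in the right piece
  have hcomm : ∀ q1 q2 : ℕ × ℕ, q1 ≠ 0 → q2 ≠ 0 → ⁅F q1, F q2⁆ ≤ F (q1 + q2) := by
    intro q1 q2 h1 h2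
    have := aux_pos h1; have := aux_pos h2
    rw [hrec (q1 + q2) (by simp only [Prod.fst_add, Prod.snd_add]; omega)]
    exact le_iSup_of_le (q1, q2) (le_iSup_of_le h1 (le_iSup_of_le h2 (le_iSup_of_le rfl le_rfl)))
  -- monotonicity: F (k + j) ≤ F k
  have hmono : ∀ k j : ℕ × ℕ, k ≠ 0 → F (k + j) ≤ F k := by
    have key : ∀ s : ℕ, ∀ k j : ℕ × ℕ, (k + j).1 + (k + j).2 = s → k ≠ 0 → F (k + j) ≤ F k := by
      intro s
      induction s using Nat.strong_induction_on with
      | _ s ih =>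
        intro k j hs hk
        by_cases hj : j = 0
        · rw [hj, add_zero]
        · have pk := aux_pos hk; have pj := aux_pos hj
          simp only [Prod.fst_add, Prod.snd_add] at hs
          rw [hrec (k + j) (by simp only [Prod.fst_add, Prod.snd_add]; omega)]
          refine iSup_le fun q => iSup_le fun hq1 => iSup_le fun hq2 => iSup_le fun hq => ?_
          have hsA : q.1.1 + q.2.1 = k.1 + j.1 := by
            simpa using congrArg Prod.fst hq
          have hsB : q.1.2 + q.2.2 = k.2 + j.2 := by
            simpa using congrArg Prod.snd hq
          have p1 := aux_pos hq1
          have p2 := aux_pos hq2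
          by_cases hz1 : (min k.1 q.1.1, min k.2 q.1.2) = (0 : ℕ × ℕ)
          · -- k ≤ q.2 componentwise
            have hzA : min k.1 q.1.1 = 0 := congrArg Prod.fst hz1
            have hzB : min k.2 q.1.2 = 0 := congrArg Prod.snd hz1
            have hle : F q.2 ≤ F k := by
              have heq : q.2 = k + (q.2.1 - k.1, q.2.2 - k.2) := by
                apply Prod.ext <;> simp only [Prod.fst_add, Prod.snd_add] <;> omega
              have := ih (q.2.1 + q.2.2) (by omega) k (q.2.1 - k.1, q.2.2 - k.2)
                (by simp only [Prod.fst_add, Prod.snd_add]; omega) hk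
              rwa [← heq] at this
            haveI := hnorm q.2 hq2
            exact le_trans (Subgroup.commutator_le_right _ _) hle
          · by_cases hz2 : (k.1 - min k.1 q.1.1, k.2 - min k.2 q.1.2) = (0 : ℕ × ℕ)
            · -- k ≤ q.1 componentwise
              have hzA : k.1 - min k.1 q.1.1 = 0 := congrArg Prod.fst hz2
              have hzB : k.2 - min k.2 q.1.2 = 0 := congrArg Prod.snd hz2
              have hle : F q.1 ≤ F k := by
                have heq : q.1 = k + (q.1.1 - k.1, q.1.2 - k.2) := by
                  apply Prod.ext <;> simp only [Prod.fst_add, Prod.snd_add] <;> omega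
                have := ih (q.1.1 + q.1.2) (by omega) k (q.1.1 - k.1, q.1.2 - k.2)
                  (by simp only [Prod.fst_add, Prod.snd_add]; omega) hk
                rwa [← heq] at this
              haveI := hnorm q.1 hq1
              exact le_trans (Subgroup.commutator_le_left _ _) hle
            · have hz1A : ¬(min k.1 q.1.1 = 0 ∧ min k.2 q.1.2 = 0) := by
                intro h; exact hz1 (Prod.ext h.1 h.2)
              have hz2A : ¬(k.1 - min k.1 q.1.1 = 0 ∧ k.2 - min k.2 q.1.2 = 0) := by
                intro h; exact hz2 (Prod.ext h.1 h.2)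
              have hle1 : F q.1 ≤ F (min k.1 q.1.1, min k.2 q.1.2) := by
                have heq : q.1 = (min k.1 q.1.1, min k.2 q.1.2)
                    + (q.1.1 - min k.1 q.1.1, q.1.2 - min k.2 q.1.2) := by
                  apply Prod.ext <;> simp only [Prod.fst_add, Prod.snd_add] <;> omega
                have := ih (q.1.1 + q.1.2) (by omega)
                  (min k.1 q.1.1, min k.2 q.1.2) (q.1.1 - min k.1 q.1.1, q.1.2 - min k.2 q.1.2)
                  (by simp only [Prod.fst_add, Prod.snd_add]; omega) hz1
                rwa [← heq] at this
              have hle2 : F q.2 ≤ F (k.1 - min k.1 q.1.1, k.2 - min k.2 q.1.2) := by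
                have heq : q.2 = (k.1 - min k.1 q.1.1, k.2 - min k.2 q.1.2)
                    + (q.2.1 - (k.1 - min k.1 q.1.1), q.2.2 - (k.2 - min k.2 q.1.2)) := by
                  apply Prod.ext <;> simp only [Prod.fst_add, Prod.snd_add] <;> omega
                have := ih (q.2.1 + q.2.2) (by omega)
                  (k.1 - min k.1 q.1.1, k.2 - min k.2 q.1.2)
                  (q.2.1 - (k.1 - min k.1 q.1.1), q.2.2 - (k.2 - min k.2 q.1.2))
                  (by simp only [Prod.fst_add, Prod.snd_add]; omega) hz2
                rwa [← heq] at this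
              have hk12 : (min k.1 q.1.1, min k.2 q.1.2)
                  + (k.1 - min k.1 q.1.1, k.2 - min k.2 q.1.2) = k := by
                apply Prod.ext <;> simp only [Prod.fst_add, Prod.snd_add] <;> omega
              calc ⁅F q.1, F q.2⁆
                  ≤ ⁅F (min k.1 q.1.1, min k.2 q.1.2),
                      F (k.1 - min k.1 q.1.1, k.2 - min k.2 q.1.2)⁆ :=
                    Subgroup.commutator_mono hle1 hle2
                _ ≤ F ((min k.1 q.1.1, min k.2 q.1.2)
                      + (k.1 - min k.1 q.1.1, k.2 - min k.2 q.1.2)) := hcomm _ _ hz1 hz2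
                _ = F k := by rw [hk12]
    intro k j hk; exact key ((k + j).1 + (k + j).2) k j rfl hk
  -- nonzeroness of sums
  have hadd_ne : ∀ p q : ℕ × ℕ, p ≠ 0 → p + q ≠ 0 := by
    intro p q hp h
    have h1 : p.1 + q.1 = 0 := by simpa using congrArg Prod.fst h
    have h2 : p.2 + q.2 = 0 := by simpa using congrArg Prod.snd h
    have := aux_pos hp
    omega
  -- main induction
  have main : ∀ s : ℕ, ∀ n : ℕ × ℕ, n.1 + n.2 = s → n ≠ 0 →
      ∀ g ∈ F n, f g * g⁻¹ ∈ F (n + m) := by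
    intro s
    induction s using Nat.strong_induction_on with
    | _ s ih =>
      intro n hs hn
      rcases lt_or_ge (n.1 + n.2) 2 with h2 | h2
      · have h1 : n.1 + n.2 = 1 := by have := aux_pos hn; omega
        rcases Nat.eq_zero_or_pos n.1 with hn1 | hn1
        · have : n = (0, 1) := Prod.ext hn1 (by omega)
          rw [this]; exact hf01
        · have : n = (1, 0) := Prod.ext (by omega) (by omega)
          rw [this]; exact hf10
      · -- |n| ≥ 2
        have hnm : n + m ≠ 0 := hadd_ne n m hn
        haveI hN : (F (n + m)).Normal := hnorm (n + m) hnm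
        set N := F (n + m) with hNdef
        set S : Subgroup G :=
          { carrier := {g | g ∈ F n ∧ f g * g⁻¹ ∈ N}
            one_mem' := ⟨one_mem _, by simpa using one_mem N⟩
            mul_mem' := by
              rintro g h ⟨hg1, hg2⟩ ⟨hh1, hh2⟩
              refine ⟨mul_mem hg1 hh1, ?_⟩
              have : f (g * h) * (g * h)⁻¹ = (f g * g⁻¹) * (g * (f h * h⁻¹) * g⁻¹) := by
                rw [map_mul]; group
              rw [this]
              exact mul_mem hg2 (hN.conj_mem _ hh2 g)
            inv_mem' := by
              rintro g ⟨hg1, hg2⟩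
              refine ⟨inv_mem hg1, ?_⟩
              have : f g⁻¹ * (g⁻¹)⁻¹ = (g⁻¹ * (f g * g⁻¹) * g)⁻¹ := by
                rw [map_inv]; group
              rw [this]
              exact inv_mem (by simpa using hN.conj_mem _ hg2 g⁻¹) } with hSdef
        have hFS : F n ≤ S := by
          rw [hrec n h2]
          refine iSup_le fun q => iSup_le fun hq1 => iSup_le fun hq2 => iSup_le fun hq => ?_
          rw [Subgroup.commutator_le]
          intro g1 hg1 g2 hg2
          have hsA : q.1.1 + q.2.1 = n.1 := by simpa using congrArg Prod.fst hq
          have hsB : q.1.2 + q.2.2 = n.2 := by simpa using congrArg Prod.snd hq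
          have p1 := aux_pos hq1
          have p2 := aux_pos hq2
          have hmemFn : ⁅g1, g2⁆ ∈ F n := by
            have := hcomm q.1 q.2 hq1 hq2
            rw [hq] at this
            exact this (Subgroup.commutator_mem_commutator hg1 hg2)
          refine ⟨hmemFn, ?_⟩
          have ha : f g1 * g1⁻¹ ∈ F (q.1 + m) :=
            ih (q.1.1 + q.1.2) (by omega) q.1 rfl hq1 g1 hg1
          have hb : f g2 * g2⁻¹ ∈ F (q.2 + m) :=
            ih (q.2.1 + q.2.2) (by omega) q.2 rfl hq2 g2 hg2
          set a := f g1 * g1⁻¹ with hadef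
          set b := f g2 * g2⁻¹ with hbdef
          have hq1m : q.1 + m ≠ 0 := hadd_ne q.1 m hq1
          have hq2m : q.2 + m ≠ 0 := hadd_ne q.2 m hq2
          have hle12 : ⁅F (q.1 + m), F q.2⁆ ≤ N := by
            have := hcomm (q.1 + m) q.2 hq1m hq2
            rwa [add_right_comm, hq] at this
          -- commutator facts landing in N
          have c1 : ⁅a, b⁆ ∈ N :=
            hle12 (Subgroup.commutator_mem_commutator ha (hmono q.2 m hq2 hb))
          have c2 : ⁅a, g2⁆ ∈ N :=
            hle12 (Subgroup.commutator_mem_commutator ha hg2)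
          have c3 : ⁅b, g1⁆ ∈ N := by
            have h' := hcomm (q.2 + m) q.1 hq2m hq1
            have e : q.2 + m + q.1 = n + m := by
              rw [add_right_comm, add_comm q.2 q.1, hq]
            rw [e] at h'
            exact h' (Subgroup.commutator_mem_commutator hb hg1)
          have c4 : ⁅a, ⁅g1, g2⁆⁆ ∈ N := by
            have h' := hcomm (q.1 + m) n hq1m hn
            have e : q.1 + m + n = (n + m) + q.1 := by
              apply Prod.ext <;> simp only [Prod.fst_add, Prod.snd_add] <;> omega
            rw [e] at h'
            exact le_trans h' (hmono (n + m) q.1 hnm)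
              (Subgroup.commutator_mem_commutator ha hmemFn)
          have c5 : ⁅b, ⁅g1, g2⁆⁆ ∈ N := by
            have h' := hcomm (q.2 + m) n hq2m hn
            have e : q.2 + m + n = (n + m) + q.2 := by
              apply Prod.ext <;> simp only [Prod.fst_add, Prod.snd_add] <;> omega
            rw [e] at h'
            exact le_trans h' (hmono (n + m) q.2 hnm)
              (Subgroup.commutator_mem_commutator hb hmemFn)
          -- pass to the quotient G ⧸ N
          have hmkc : ∀ u v : G, ((⁅u, v⁆ : G) : G ⧸ N) = ⁅(u : G ⧸ N), (v : G ⧸ N)⁆ := by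
            intro u v
            simp [commutatorElement_def]
          have hAw' : (a : G ⧸ N) * ((g1 : G ⧸ N) * g2 * (g1 : G ⧸ N)⁻¹ * (g2 : G ⧸ N)⁻¹)
              = ((g1 : G ⧸ N) * g2 * (g1 : G ⧸ N)⁻¹ * (g2 : G ⧸ N)⁻¹) * (a : G ⧸ N) := by
            have := aux_commute_mk N c4
            rwa [hmkc g1 g2, commutatorElement_def] at this
          have hBw' : (b : G ⧸ N) * ((g1 : G ⧸ N) * g2 * (g1 : G ⧸ N)⁻¹ * (g2 : G ⧸ N)⁻¹)
              = ((g1 : G ⧸ N) * g2 * (g1 : G ⧸ N)⁻¹ * (g2 : G ⧸ N)⁻¹) * (b : G ⧸ N) := by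
            have := aux_commute_mk N c5
            rwa [hmkc g1 g2, commutatorElement_def] at this
          have hkey : ⁅(a : G ⧸ N) * (g1 : G ⧸ N), (b : G ⧸ N) * (g2 : G ⧸ N)⁆
              = ⁅(g1 : G ⧸ N), (g2 : G ⧸ N)⁆ :=
            key_calc _ _ _ _ (aux_commute_mk N c1) (aux_commute_mk N c2)
              (aux_commute_mk N c3) hAw' hBw'
          have hfa : f g1 = a * g1 := by rw [hadef, inv_mul_cancel_right]
          have hfb : f g2 = b * g2 := by rw [hbdef, inv_mul_cancel_right]
          have hquot : ((f ⁅g1, g2⁆ : G) : G ⧸ N) = ((⁅g1, g2⁆ : G) : G ⧸ N) := by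
            rw [map_commutatorElement, hmkc, hmkc, hfa, hfb]
            push_cast
            exact hkey
          have t : (f ⁅g1, g2⁆)⁻¹ * ⁅g1, g2⁆ ∈ N := (QuotientGroup.eq).mp hquot
          have : f ⁅g1, g2⁆ * ⁅g1, g2⁆⁻¹
              = (⁅g1, g2⁆ * ((f ⁅g1, g2⁆)⁻¹ * ⁅g1, g2⁆) * ⁅g1, g2⁆⁻¹)⁻¹ := by group
          rw [this]
          exact inv_mem (hN.conj_mem _ t _)
        intro g hg
        exact (hFS hg).2
  intro n hn
  exact main (n.1 + n.2) n rfl hn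
end
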